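/- Differentiation property of the Clifford Fourier transform: for f : ℝ³ → Cl(3,0) differentiable with f and a·∇f integrable, and f vanishing at infinity, F{a·∇f}(ω) = i₃ (a·ω) F{f}(ω) for any constant vector a ∈ ℝ³. -/

import Mathlib

open MeasureTheory Real Filter

noncomputable section

/-- The Clifford algebra Cl(3,0) as coefficient vectors over the basis
{1, e₁, e₂, e₃, e₁₂, e₃₁, e₂₃, e₁₂₃} (indices 0,…,7). -/
abbrev Cl3 : Type := Fin 8 → ℝ

namespace Cl3

/-- Structure constants: e_i * e_j = sign • e_index. -/
def tbl : Fin 8 → Fin 8 → Fin 8 × ℝ :=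
  ![![(0, 1), (1, 1), (2, 1), (3, 1), (4, 1), (5, 1), (6, 1), (7, 1)],
    ![(1, 1), (0, 1), (4, 1), (5, -1), (2, 1), (3, -1), (7, 1), (6, 1)],
    ![(2, 1), (4, -1), (0, 1), (6, 1), (1, -1), (7, 1), (3, 1), (5, 1)],
    ![(3, 1), (5, 1), (6, -1), (0, 1), (7, 1), (1, 1), (2, -1), (4, 1)],
    ![(4, 1), (2, -1), (1, 1), (7, 1), (0, -1), (6, 1), (5, -1), (3, -1)],
    ![(5, 1), (3, 1), (7, 1), (1, -1), (6, -1), (0, -1), (4, 1), (2, -1)],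
    ![(6, 1), (7, 1), (3, -1), (2, 1), (5, 1), (4, -1), (0, -1), (1, -1)],
    ![(7, 1), (6, 1), (5, 1), (4, 1), (3, -1), (2, -1), (1, -1), (0, -1)]]

/-- The geometric (Clifford) product on Cl(3,0). -/
def mul (x y : Cl3) : Cl3 := fun k =>
  ∑ i : Fin 8, ∑ j : Fin 8,
    (if (tbl i j).1 = k then (tbl i j).2 else 0) * x i * y j

/-- The reverse anti-automorphism: negates the grade-2 and grade-3 parts. -/
def reverse (M : Cl3) : Cl3 := fun k => if 4 ≤ k.val then -M k else M k

/-- The scalar (grade-0) part. -/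
def scalarPart (M : Cl3) : ℝ := M 0

/-- The square norm ‖M‖² = ⟨M M̃⟩₀. -/
def normSq (M : Cl3) : ℝ := scalarPart (mul M (reverse M))

/-- The identity 1 of Cl(3,0). -/
def one : Cl3 := fun k => if k = 0 then 1 else 0

/-- The unit pseudoscalar i₃ = e₁e₂e₃. -/
def i3 : Cl3 := fun k => if k = 7 then 1 else 0

/-- The orthonormal vector generators e₁, e₂, e₃. -/
def e (i : Fin 3) : Cl3 := fun k => if k.val = i.val + 1 then 1 else 0

/-- Euclidean inner product on ℝ³. -/
def dot (a b : Fin 3 → ℝ) : ℝ := ∑ i, a i * b i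

/-- The kernel e^{−i₃ θ} = cos θ − i₃ sin θ of the Clifford Fourier transform. -/
def expNeg (θ : ℝ) : Cl3 := Real.cos θ • one - Real.sin θ • i3

/-- e^{+i₃ θ} = cos θ + i₃ sin θ. -/
def expPos (θ : ℝ) : Cl3 := Real.cos θ • one + Real.sin θ • i3

/-- The Clifford Fourier transform F{f}(ω) = ∫ f(x) e^{−i₃ ω·x} d³x. -/
def CFT (f : (Fin 3 → ℝ) → Cl3) (ω : Fin 3 → ℝ) : Cl3 :=
  ∫ x : Fin 3 → ℝ, mul (f x) (expNeg (dot ω x))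

/-- Vector differential a·∇f (directional derivative in direction a). -/
def dirDeriv (a : Fin 3 → ℝ) (f : (Fin 3 → ℝ) → Cl3) (x : Fin 3 → ℝ) : Cl3 :=
  fderiv ℝ f x a

/-- Partial derivative ∂ₖ f. -/
def pderiv (k : Fin 3) (f : (Fin 3 → ℝ) → Cl3) (x : Fin 3 → ℝ) : Cl3 :=
  fderiv ℝ f x (Pi.single k 1)

/-- The vector derivative ∇f = Σₖ eₖ ∂ₖ f. -/
def vecDeriv (f : (Fin 3 → ℝ) → Cl3) (x : Fin 3 → ℝ) : Cl3 :=
  ∑ k : Fin 3, mul (e k) (pderiv k f x)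

/-- Convolution of Cl(3,0)-valued functions. -/
def conv (f g : (Fin 3 → ℝ) → Cl3) (x : Fin 3 → ℝ) : Cl3 :=
  ∫ y : Fin 3 → ℝ, mul (f y) (g (x - y))

end Cl3

open Cl3


namespace CFTaux

open Cl3

lemma tbl_0_0 : tbl 0 0 = (0, 1) := rfl
lemma tbl_0_1 : tbl 0 1 = (1, 1) := rfl
lemma tbl_0_2 : tbl 0 2 = (2, 1) := rfl
lemma tbl_0_3 : tbl 0 3 = (3, 1) := rfl
lemma tbl_0_4 : tbl 0 4 = (4, 1) := rfl
lemma tbl_0_5 : tbl 0 5 = (5, 1) := rfl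
lemma tbl_0_6 : tbl 0 6 = (6, 1) := rfl
lemma tbl_0_7 : tbl 0 7 = (7, 1) := rfl
lemma tbl_1_0 : tbl 1 0 = (1, 1) := rfl
lemma tbl_1_1 : tbl 1 1 = (0, 1) := rfl
lemma tbl_1_2 : tbl 1 2 = (4, 1) := rfl
lemma tbl_1_3 : tbl 1 3 = (5, -1) := rfl
lemma tbl_1_4 : tbl 1 4 = (2, 1) := rfl
lemma tbl_1_5 : tbl 1 5 = (3, -1) := rfl
lemma tbl_1_6 : tbl 1 6 = (7, 1) := rfl
lemma tbl_1_7 : tbl 1 7 = (6, 1) := rfl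
lemma tbl_2_0 : tbl 2 0 = (2, 1) := rfl
lemma tbl_2_1 : tbl 2 1 = (4, -1) := rfl
lemma tbl_2_2 : tbl 2 2 = (0, 1) := rfl
lemma tbl_2_3 : tbl 2 3 = (6, 1) := rfl
lemma tbl_2_4 : tbl 2 4 = (1, -1) := rfl
lemma tbl_2_5 : tbl 2 5 = (7, 1) := rfl
lemma tbl_2_6 : tbl 2 6 = (3, 1) := rfl
lemma tbl_2_7 : tbl 2 7 = (5, 1) := rfl
lemma tbl_3_0 : tbl 3 0 = (3, 1) := rfl
lemma tbl_3_1 : tbl 3 1 = (5, 1) := rfl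
lemma tbl_3_2 : tbl 3 2 = (6, -1) := rfl
lemma tbl_3_3 : tbl 3 3 = (0, 1) := rfl
lemma tbl_3_4 : tbl 3 4 = (7, 1) := rfl
lemma tbl_3_5 : tbl 3 5 = (1, 1) := rfl
lemma tbl_3_6 : tbl 3 6 = (2, -1) := rfl
lemma tbl_3_7 : tbl 3 7 = (4, 1) := rfl
lemma tbl_4_0 : tbl 4 0 = (4, 1) := rfl
lemma tbl_4_1 : tbl 4 1 = (2, -1) := rfl
lemma tbl_4_2 : tbl 4 2 = (1, 1) := rfl
lemma tbl_4_3 : tbl 4 3 = (7, 1) := rfl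
lemma tbl_4_4 : tbl 4 4 = (0, -1) := rfl
lemma tbl_4_5 : tbl 4 5 = (6, 1) := rfl
lemma tbl_4_6 : tbl 4 6 = (5, -1) := rfl
lemma tbl_4_7 : tbl 4 7 = (3, -1) := rfl
lemma tbl_5_0 : tbl 5 0 = (5, 1) := rfl
lemma tbl_5_1 : tbl 5 1 = (3, 1) := rfl
lemma tbl_5_2 : tbl 5 2 = (7, 1) := rfl
lemma tbl_5_3 : tbl 5 3 = (1, -1) := rfl
lemma tbl_5_4 : tbl 5 4 = (6, -1) := rfl
lemma tbl_5_5 : tbl 5 5 = (0, -1) := rfl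
lemma tbl_5_6 : tbl 5 6 = (4, 1) := rfl
lemma tbl_5_7 : tbl 5 7 = (2, -1) := rfl
lemma tbl_6_0 : tbl 6 0 = (6, 1) := rfl
lemma tbl_6_1 : tbl 6 1 = (7, 1) := rfl
lemma tbl_6_2 : tbl 6 2 = (3, -1) := rfl
lemma tbl_6_3 : tbl 6 3 = (2, 1) := rfl
lemma tbl_6_4 : tbl 6 4 = (5, 1) := rfl
lemma tbl_6_5 : tbl 6 5 = (4, -1) := rfl
lemma tbl_6_6 : tbl 6 6 = (0, -1) := rfl
lemma tbl_6_7 : tbl 6 7 = (1, -1) := rfl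
lemma tbl_7_0 : tbl 7 0 = (7, 1) := rfl
lemma tbl_7_1 : tbl 7 1 = (6, 1) := rfl
lemma tbl_7_2 : tbl 7 2 = (5, 1) := rfl
lemma tbl_7_3 : tbl 7 3 = (4, 1) := rfl
lemma tbl_7_4 : tbl 7 4 = (3, -1) := rfl
lemma tbl_7_5 : tbl 7 5 = (2, -1) := rfl
lemma tbl_7_6 : tbl 7 6 = (1, -1) := rfl
lemma tbl_7_7 : tbl 7 7 = (0, -1) := rfl

lemma dot_comm' (a b : Fin 3 → ℝ) : dot a b = dot b a := by
  simp [dot, mul_comm]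

/-- The geometric product as a bilinear map. -/
def B0 : Cl3 →ₗ[ℝ] Cl3 →ₗ[ℝ] Cl3 :=
  LinearMap.mk₂ ℝ mul
    (fun x x' y => by
      funext k
      simp only [mul, Pi.add_apply]
      rw [← Finset.sum_add_distrib]
      refine Finset.sum_congr rfl fun i _ => ?_
      rw [← Finset.sum_add_distrib]
      exact Finset.sum_congr rfl fun j _ => by ring)
    (fun c x y => by
      funext k
      simp only [mul, Pi.smul_apply, smul_eq_mul, Finset.mul_sum]
      exact Finset.sum_congr rfl fun i _ => Finset.sum_congr rfl fun j _ => by ring)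
    (fun x y y' => by
      funext k
      simp only [mul, Pi.add_apply]
      rw [← Finset.sum_add_distrib]
      refine Finset.sum_congr rfl fun i _ => ?_
      rw [← Finset.sum_add_distrib]
      exact Finset.sum_congr rfl fun j _ => by ring)
    (fun c x y => by
      funext k
      simp only [mul, Pi.smul_apply, smul_eq_mul, Finset.mul_sum]
      exact Finset.sum_congr rfl fun i _ => Finset.sum_congr rfl fun j _ => by ring)

/-- The geometric product as a continuous bilinear map. -/
def B : Cl3 →L[ℝ] Cl3 →L[ℝ] Cl3 :=
  LinearMap.toContinuousLinearMap
    ((LinearMap.toContinuousLinearMap :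
        (Cl3 →ₗ[ℝ] Cl3) ≃ₗ[ℝ] (Cl3 →L[ℝ] Cl3)).toLinearMap ∘ₗ B0)

@[simp] lemma B_apply (x y : Cl3) : B x y = mul x y := rfl

attribute [irreducible] B

set_option maxHeartbeats 4000000 in
/-- The pseudoscalar is central: `x (i₃ y) = i₃ (x y)`. -/
lemma mul_i3_comm (x y : Cl3) : mul x (mul i3 y) = mul i3 (mul x y) := by
  funext k
  fin_cases k <;> (simp [mul, i3, Fin.sum_univ_eight, tbl_0_0, tbl_0_1, tbl_0_2, tbl_0_3, tbl_0_4, tbl_0_5, tbl_0_6, tbl_0_7, tbl_1_0, tbl_1_1, tbl_1_2, tbl_1_3, tbl_1_4, tbl_1_5, tbl_1_6, tbl_1_7, tbl_2_0, tbl_2_1, tbl_2_2, tbl_2_3, tbl_2_4, tbl_2_5, tbl_2_6, tbl_2_7, tbl_3_0, tbl_3_1, tbl_3_2, tbl_3_3, tbl_3_4, tbl_3_5, tbl_3_6, tbl_3_7, tbl_4_0, tbl_4_1, tbl_4_2, tbl_4_3, tbl_4_4, tbl_4_5, tbl_4_6, tbl_4_7, tbl_5_0, tbl_5_1, tbl_5_2,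 tbl_5_3, tbl_5_4, tbl_5_5, tbl_5_6, tbl_5_7, tbl_6_0, tbl_6_1, tbl_6_2, tbl_6_3, tbl_6_4, tbl_6_5, tbl_6_6, tbl_6_7, tbl_7_0, tbl_7_1, tbl_7_2, tbl_7_3, tbl_7_4, tbl_7_5, tbl_7_6, tbl_7_7]; try ring)

set_option maxHeartbeats 1000000 in
lemma i3_mul_expNeg (θ : ℝ) :
    mul i3 (expNeg θ) = Real.sin θ • one + Real.cos θ • i3 := by
  funext k
  fin_cases k <;>
    simp [mul, i3, one, expNeg, Fin.sum_univ_eight, Pi.sub_apply, Pi.smul_apply,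
      smul_eq_mul, tbl_0_0, tbl_0_1, tbl_0_2, tbl_0_3, tbl_0_4, tbl_0_5, tbl_0_6, tbl_0_7, tbl_1_0, tbl_1_1, tbl_1_2, tbl_1_3, tbl_1_4, tbl_1_5, tbl_1_6, tbl_1_7, tbl_2_0, tbl_2_1, tbl_2_2, tbl_2_3, tbl_2_4, tbl_2_5, tbl_2_6, tbl_2_7, tbl_3_0, tbl_3_1, tbl_3_2, tbl_3_3, tbl_3_4, tbl_3_5, tbl_3_6, tbl_3_7, tbl_4_0, tbl_4_1, tbl_4_2, tbl_4_3, tbl_4_4, tbl_4_5, tbl_4_6, tbl_4_7, tbl_5_0, tbl_5_1, tbl_5_2, tbl_5_3, tbl_5_4, tbl_5_5, tbl_5_6, tbl_5_7, tbl_6_0, tbl_6_1, tbl_6_2, tbl_6_3, tbl_6_4, tbl_6_5, tbl_6_6, tbl_6_7, tbl_7_0, tbl_7_1, tbl_7_2, tbl_7_3, tbl_7_4, tbl_7_5, tbl_7_6, tbl_7_7]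

lemma norm_expNeg_le (θ : ℝ) : ‖expNeg θ‖ ≤ 1 := by
  rw [pi_norm_le_iff_of_nonneg zero_le_one]
  intro k
  fin_cases k <;>
    simp [expNeg, one, i3, Pi.sub_apply, Pi.smul_apply, smul_eq_mul, Real.norm_eq_abs,
      Real.abs_cos_le_one, Real.abs_sin_le_one, abs_neg]

/-- The linear functional `v ↦ ω · v`. -/
def lin (ω : Fin 3 → ℝ) : (Fin 3 → ℝ) →L[ℝ] ℝ :=
  ∑ i, ω i • ContinuousLinearMap.proj i

lemma lin_apply (ω v : Fin 3 → ℝ) : lin ω v = dot ω v := by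
  simp [lin, dot, ContinuousLinearMap.sum_apply, ContinuousLinearMap.smul_apply,
    ContinuousLinearMap.proj_apply, smul_eq_mul]

lemma hasFDerivAt_expNeg_dot (ω x : Fin 3 → ℝ) :
    HasFDerivAt (fun x => expNeg (dot ω x))
      ((ContinuousLinearMap.smulRight (1 : ℝ →L[ℝ] ℝ)
        (-Real.sin (dot ω x) • one - Real.cos (dot ω x) • i3)).comp (lin ω)) x := by
  have hθ : HasDerivAt expNeg
      (-Real.sin (dot ω x) • one - Real.cos (dot ω x) • i3) (dot ω x) := by
    have h1 : HasDerivAt (fun θ : ℝ => Real.cos θ • one)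
        (-Real.sin (dot ω x) • one) (dot ω x) := (Real.hasDerivAt_cos _).smul_const one
    have h2 : HasDerivAt (fun θ : ℝ => Real.sin θ • i3)
        (Real.cos (dot ω x) • i3) (dot ω x) := (Real.hasDerivAt_sin _).smul_const i3
    exact h1.sub h2
  have he : (fun v : Fin 3 → ℝ => dot ω v) = ⇑(lin ω) :=
    funext fun v => (lin_apply ω v).symm
  have hl : HasFDerivAt (fun v : Fin 3 → ℝ => dot ω v) (lin ω) x := by
    rw [he]; exact (lin ω).hasFDerivAt
  have := hθ.hasFDerivAt.comp x hl
  simpa [Function.comp_def, ContinuousLinearMap.smulRight_one_eq_toSpanSingleton] using this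

lemma fderiv_expNeg_dot (ω x a : Fin 3 → ℝ) :
    fderiv ℝ (fun x => expNeg (dot ω x)) x a
      = -(dot ω a • mul i3 (expNeg (dot ω x))) := by
  rw [(hasFDerivAt_expNeg_dot ω x).fderiv]
  rw [i3_mul_expNeg]
  simp only [ContinuousLinearMap.coe_comp', Function.comp_apply,
    ContinuousLinearMap.smulRight_apply, ContinuousLinearMap.one_apply, lin_apply]
  funext k
  simp [Pi.smul_apply, Pi.sub_apply, Pi.add_apply, Pi.neg_apply, smul_eq_mul,
    one, i3]
  split_ifs <;> ring

end CFTaux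

open CFTaux

set_option maxHeartbeats 2000000 in
/-- Differentiation property: F{a·∇f}(ω) = i₃ (a·ω) F{f}(ω). -/
theorem CFT_dirDeriv (f : (Fin 3 → ℝ) → Cl3) (a : Fin 3 → ℝ)
    (hdiff : Differentiable ℝ f) (hf : Integrable f)
    (hdf : Integrable (fun x => dirDeriv a f x))
    (hdecay : Tendsto f (cocompact (Fin 3 → ℝ)) (nhds 0)) (ω : Fin 3 → ℝ) :
    CFT (fun x => dirDeriv a f x) ω = (dot a ω) • mul i3 (CFT f ω) := by
  -- the Fourier kernel
  have hEdiff : Differentiable ℝ (fun x : Fin 3 → ℝ => expNeg (dot ω x)) :=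
    fun x => (hasFDerivAt_expNeg_dot ω x).differentiableAt
  have hEcont : Continuous (fun x : Fin 3 → ℝ => expNeg (dot ω x)) :=
    hEdiff.continuous
  -- integrability of products with the kernel
  have key : ∀ g : (Fin 3 → ℝ) → Cl3, Integrable g →
      Integrable (fun x => B (g x) (expNeg (dot ω x))) := by
    intro g hg
    refine (hg.norm.const_mul ‖B‖).mono' ?_ ?_
    · exact B.continuous₂.comp_aestronglyMeasurable
        (hg.aestronglyMeasurable.prodMk hEcont.aestronglyMeasurable)
    · filter_upwards with x
      calc ‖B (g x) (expNeg (dot ω x))‖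
          ≤ ‖B‖ * ‖g x‖ * ‖expNeg (dot ω x)‖ := B.le_opNorm₂ _ _
        _ ≤ ‖B‖ * ‖g x‖ * 1 := by
            have h1 := norm_expNeg_le (dot ω x)
            have h0 : (0:ℝ) ≤ ‖B‖ * ‖g x‖ := by positivity
            exact mul_le_mul_of_nonneg_left h1 h0
        _ = ‖B‖ * ‖g x‖ := mul_one _
  have hfg := key f hf
  have hdf' : Integrable (fun x => fderiv ℝ f x a) := hdf
  have hf'g := key _ hdf'
  have hEeq : (fun x => B (f x) (fderiv ℝ (fun x => expNeg (dot ω x)) x a))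
      = fun x => (-(dot ω a)) • (B i3) (B (f x) (expNeg (dot ω x))) := by
    funext x
    rw [fderiv_expNeg_dot]
    rw [map_neg, _root_.map_smul]
    simp only [B_apply]
    rw [mul_i3_comm]
    rw [neg_smul]
  have hfg' : Integrable
      (fun x => B (f x) (fderiv ℝ (fun x => expNeg (dot ω x)) x a)) := by
    rw [hEeq]
    exact ((B i3).integrable_comp hfg).smul (-(dot ω a))
  have IBP := integral_bilinear_fderiv_right_eq_neg_left_of_integrable
      (μ := (volume : Measure (Fin 3 → ℝ))) (B := B) (v := a) hf'g hfg' hfg (fun x _ => hdiff x) (fun x _ => hEdiff x)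
  have h1 : CFT (fun x => dirDeriv a f x) ω
      = ∫ x : Fin 3 → ℝ, B (fderiv ℝ f x a) (expNeg (dot ω x)) := by
    simp only [CFT, dirDeriv, B_apply]
  rw [h1]
  have h2 : ∫ x : Fin 3 → ℝ, B (fderiv ℝ f x a) (expNeg (dot ω x))
      = - ∫ x : Fin 3 → ℝ, B (f x) (fderiv ℝ (fun x => expNeg (dot ω x)) x a) := by
    rw [IBP, neg_neg]
  rw [h2, hEeq]
  rw [integral_smul]
  rw [(B i3).integral_comp_comm hfg]
  rw [neg_smul, neg_neg]
  simp only [B_apply]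
  have h3 : (∫ x : Fin 3 → ℝ, mul (f x) (expNeg (dot ω x))) = CFT f ω := rfl
  rw [h3, dot_comm' a ω]
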